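/- Let x, y be probability vectors on n > 1 outcomes with nonincreasing components, x ≺ y and x ≠ y, and let U be the upper triangular row-stochastic matrix with x = yU obtained from the canonical sequence of B-transforms. Then Σ_i x_i log₂(1/(uU)_i) > log₂ n, where u = (1/n, ..., 1/n). -/

import Mathlib

open Finset Matrix

/-- Prefix sum of the first `k` components. -/
def psum {n : ℕ} (x : Fin n → ℝ) (k : ℕ) : ℝ :=
  ∑ i ∈ Finset.filter (fun i : Fin n => (i : ℕ) < k) Finset.univ, x i

/-- `x` is majorized by `y` (both assumed sorted nonincreasingly). -/
def Maj {n : ℕ} (x y : Fin n → ℝ) : Prop :=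
  (∀ k, k < n → psum x k ≤ psum y k) ∧ (∑ i, x i) = ∑ i, y i

/-- An A-transform: for `i < j` and `λ ∈ [0,1]`, replace `x i` by `x i + λ * x j`
and `x j` by `(1 - λ) * x j`. -/
def ATrans {n : ℕ} (x x' : Fin n → ℝ) : Prop :=
  ∃ (i j : Fin n) (lam : ℝ), i < j ∧ 0 ≤ lam ∧ lam ≤ 1 ∧
    x' = Function.update (Function.update x i (x i + lam * x j)) j ((1 - lam) * x j)

/-- A B-transform: for `i < j` and `λ ∈ [0,1]`, replace `y i` by `(1 - λ) * y i`
and `y j` by `y j + λ * y i`. -/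
def BTrans {n : ℕ} (y y' : Fin n → ℝ) : Prop :=
  ∃ (i j : Fin n) (lam : ℝ), i < j ∧ 0 ≤ lam ∧ lam ≤ 1 ∧
    y' = Function.update (Function.update y i ((1 - lam) * y i)) j (y j + lam * y i)

/-- Lower triangular row-stochastic matrix. -/
def LowerRS {n : ℕ} (L : Matrix (Fin n) (Fin n) ℝ) : Prop :=
  (∀ i j, 0 ≤ L i j) ∧ (∀ i j : Fin n, i < j → L i j = 0) ∧ (∀ i, ∑ j, L i j = 1)

/-- Upper triangular row-stochastic matrix. -/
def UpperRS {n : ℕ} (U : Matrix (Fin n) (Fin n) ℝ) : Prop :=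
  (∀ i j, 0 ≤ U i j) ∧ (∀ i j : Fin n, j < i → U i j = 0) ∧ (∀ i, ∑ j, U i j = 1)

/-- The matrix of a B-transform with indices `i < j` and coefficient `lam`. -/
def BMat {n : ℕ} (i j : Fin n) (lam : ℝ) : Matrix (Fin n) (Fin n) ℝ :=
  fun a b =>
    if a = i then (if b = i then 1 - lam else if b = j then lam else 0)
    else (if a = b then 1 else 0)

/-- A canonical B-transform chain from `y` down to `x`:
`z 0 = y`, `z s = x`, and at each step `t < s` the index `jj t` is the largest
index where `z t` exceeds `x`, `kk t` is the smallest index above `jj t` where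
`x` exceeds `z t`, and `lam t = min (z t (jj t) - x (jj t)) (x (kk t) - z t (kk t)) / z t (jj t)`,
with `z (t+1) = (z t) ⬝ᵥ BMat (jj t) (kk t) (lam t)` (row-vector times matrix). -/
structure CanonChain {n : ℕ} (x y : Fin n → ℝ) (s : ℕ)
    (z : ℕ → Fin n → ℝ) (jj kk : ℕ → Fin n) (lam : ℕ → ℝ) : Prop where
  z_zero : z 0 = y
  z_last : z s = x
  lt : ∀ t < s, jj t < kk t
  j_big : ∀ t < s, x (jj t) < z t (jj t)
  j_largest : ∀ t < s, ∀ i : Fin n, jj t < i → z t i ≤ x i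
  k_small : ∀ t < s, z t (kk t) < x (kk t)
  k_smallest : ∀ t < s, ∀ i : Fin n, jj t < i → i < kk t → x i ≤ z t i
  lam_def : ∀ t < s,
    lam t = min (z t (jj t) - x (jj t)) (x (kk t) - z t (kk t)) / z t (jj t)
  step : ∀ t < s, z (t + 1) = Matrix.vecMul (z t) (BMat (jj t) (kk t) (lam t))


namespace Stmt16Aux

variable {n : ℕ}

lemma upperRS_one : UpperRS (1 : Matrix (Fin n) (Fin n) ℝ) := by
  refine ⟨fun i j => ?_, fun i j h => ?_, fun i => ?_⟩
  · by_cases h : i = j <;> simp [Matrix.one_apply, h]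
  · rw [Matrix.one_apply_ne h.ne']
  · simp [Matrix.one_apply]

lemma upperRS_mul {A B : Matrix (Fin n) (Fin n) ℝ} (hA : UpperRS A) (hB : UpperRS B) :
    UpperRS (A * B) := by
  obtain ⟨hA0, hAt, hA1⟩ := hA
  obtain ⟨hB0, hBt, hB1⟩ := hB
  refine ⟨fun i j => ?_, fun i j hji => ?_, fun i => ?_⟩
  · rw [Matrix.mul_apply]
    exact Finset.sum_nonneg fun k _ => mul_nonneg (hA0 i k) (hB0 k j)
  · rw [Matrix.mul_apply]
    apply Finset.sum_eq_zero
    intro k _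
    rcases lt_or_ge k i with h | h
    · rw [hAt i k h, zero_mul]
    · rw [hBt k j (lt_of_lt_of_le hji h), mul_zero]
  · simp only [Matrix.mul_apply]
    rw [Finset.sum_comm]
    simp only [← Finset.mul_sum]
    simp only [hB1, mul_one]
    exact hA1 i

lemma upperRS_BMat {i j : Fin n} {lam : ℝ} (hij : i < j) (h0 : 0 ≤ lam) (h1 : lam ≤ 1) :
    UpperRS (BMat i j lam) := by
  refine ⟨fun a b => ?_, fun a b hba => ?_, fun a => ?_⟩
  · simp only [BMat]; split_ifs <;> linarith
  · simp only [BMat]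
    split_ifs with h2 h3 h4 h5 <;> try rfl
    · exact absurd hba (by rw [h2, h3]; exact lt_irrefl _)
    · exact absurd (h2 ▸ h4 ▸ hba) (not_lt_of_gt hij)
    · exact absurd hba (by rw [h5]; exact lt_irrefl _)
  · by_cases h : a = i
    · subst h
      have step : ∀ b : Fin n, BMat a j lam a b
          = (if b = a then 1 - lam else 0) + (if b = j then lam else 0) := by
        intro b
        show (if a = a then (if b = a then 1 - lam else if b = j then lam else 0)
            else if a = b then 1 else 0) = _
        rw [if_pos rfl]
        split_ifs with hb1 hb2 <;> try ring
        exact absurd (hb1.symm.trans hb2) hij.ne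
      rw [Finset.sum_congr rfl fun b _ => step b, Finset.sum_add_distrib]
      simp
    · have step : ∀ b : Fin n, BMat i j lam a b = if a = b then 1 else 0 := by
        intro b
        show (if a = i then _ else if a = b then 1 else 0) = _
        rw [if_neg h]
      rw [Finset.sum_congr rfl fun b _ => step b]
      simp

lemma upperRS_prod : ∀ l : List (Matrix (Fin n) (Fin n) ℝ),
    (∀ M ∈ l, UpperRS M) → UpperRS l.prod
  | [], _ => by simpa using upperRS_one
  | M :: l, h => by
    rw [List.prod_cons]
    exact upperRS_mul (h M List.mem_cons_self)
      (upperRS_prod l fun N hN => h N (List.mem_cons_of_mem _ hN))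

lemma offdiag_zero {U : Matrix (Fin n) (Fin n) ℝ} (hU0 : ∀ i j, 0 ≤ U i j)
    (hU1 : ∀ i, ∑ j, U i j = 1) {k b : Fin n} (hd : U k k = 1) (hb : b ≠ k) :
    U k b = 0 := by
  have hsum : ∑ j ∈ Finset.univ.erase k, U k j = 0 := by
    have := Finset.add_sum_erase Finset.univ (fun j => U k j) (Finset.mem_univ k)
    rw [hU1 k] at this
    linarith [hd]
  have := (Finset.sum_eq_zero_iff_of_nonneg (fun j _ => hU0 k j)).mp hsum
  exact this b (Finset.mem_erase.mpr ⟨hb, Finset.mem_univ b⟩)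

end Stmt16Aux

theorem stmt16 {n : ℕ} (hn : 1 < n) (x y : Fin n → ℝ)
    (hx0 : ∀ i, 0 ≤ x i) (hx1 : ∑ i, x i = 1)
    (hy0 : ∀ i, 0 ≤ y i) (hy1 : ∑ i, y i = 1)
    (hxs : Antitone x) (hys : Antitone y)
    (hmaj : Maj x y) (hne : x ≠ y)
    (s : ℕ) (z : ℕ → Fin n → ℝ) (jj kk : ℕ → Fin n) (lam : ℕ → ℝ)
    (hchain : CanonChain x y s z jj kk lam)
    (U : Matrix (Fin n) (Fin n) ℝ)
    (hU : U = (((List.range s).map (fun t => BMat (jj t) (kk t) (lam t))).prod)) :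
    Real.logb 2 n <
      ∑ i, x i * Real.logb 2 (1 / Matrix.vecMul (fun _ : Fin n => (1 : ℝ) / n) U i) := by
  classical
  obtain ⟨hz0, hzs, hlt, hjb, _, hks, _, hld, hst⟩ := hchain
  have hnR : (0:ℝ) < n := by positivity
  have hn1R : (1:ℝ) < n := by exact_mod_cast hn
  -- lam bounds
  have hlam : ∀ t, t < s → 0 ≤ lam t ∧ lam t ≤ 1 := by
    intro t ht
    have hzj : x (jj t) < z t (jj t) := hjb t ht
    have hzjpos : 0 < z t (jj t) := lt_of_le_of_lt (hx0 _) hzj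
    have hmin : 0 ≤ min (z t (jj t) - x (jj t)) (x (kk t) - z t (kk t)) :=
      le_min (by linarith) (by linarith [hks t ht])
    constructor
    · rw [hld t ht]; positivity
    · rw [hld t ht, div_le_one hzjpos]
      exact le_trans (min_le_left _ _) (by linarith [hx0 (jj t)])
  -- U is upper triangular row stochastic
  have hUU : UpperRS U := by
    rw [hU]
    apply Stmt16Aux.upperRS_prod
    intro M hM
    simp only [List.mem_map, List.mem_range] at hM
    obtain ⟨t, ht, rfl⟩ := hM
    exact Stmt16Aux.upperRS_BMat (hlt t ht) (hlam t ht).1 (hlam t ht).2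
  obtain ⟨hU0, hUt, hU1⟩ := hUU
  -- x = y * U
  have hxy : x = Matrix.vecMul y U := by
    have key : ∀ t, t ≤ s → z t =
        Matrix.vecMul y (((List.range t).map (fun t => BMat (jj t) (kk t) (lam t))).prod) := by
      intro t
      induction t with
      | zero => intro _; simp [hz0]
      | succ t ih =>
        intro ht
        have ht' : t < s := ht
        rw [hst t ht', ih (le_of_lt ht'), Matrix.vecMul_vecMul]
        rw [List.range_succ, List.map_append, List.prod_append]
        simp
    rw [← hzs, key s le_rfl, ← hU]
  set c : Fin n → ℝ := fun k => ∑ a, U a k with hc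
  have hxk : ∀ k, x k = ∑ a, y a * U a k := by
    intro k
    rw [hxy]
    simp [Matrix.vecMul, dotProduct]
  have hc0 : ∀ k, 0 ≤ c k := fun k => Finset.sum_nonneg fun a _ => hU0 a k
  have hxc : ∀ k, x k ≤ c k := by
    intro k
    rw [hxk k]
    apply Finset.sum_le_sum
    intro a _
    have hy_le : y a ≤ 1 := by
      rw [← hy1]
      exact Finset.single_le_sum (fun i _ => hy0 i) (Finset.mem_univ a)
    nlinarith [hU0 a k, hy0 a]
  -- sum of x*c is at most 1
  have hsum_xc : ∑ k, x k * c k ≤ 1 := by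
    have h1 : ∑ k, x k * c k = ∑ k, ∑ a, x k * U a k := by
      simp [hc, Finset.mul_sum]
    have h2 : ∑ k, ∑ a, x k * U a k ≤ ∑ k, ∑ a, x a * U a k := by
      apply Finset.sum_le_sum; intro k _
      apply Finset.sum_le_sum; intro a _
      rcases lt_or_ge k a with h | h
      · rw [hUt a k h, mul_zero, mul_zero]
      · exact mul_le_mul_of_nonneg_right (hxs h) (hU0 a k)
    have h3 : ∑ k, ∑ a, x a * U a k = 1 := by
      rw [Finset.sum_comm]
      simp only [← Finset.mul_sum, hU1, mul_one]
      exact hx1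
    linarith
  -- main claim
  have key : ∑ k, x k * Real.log (c k) < 0 := by
    by_cases hH : ∀ k, 0 < x k → c k = 1
    · -- rigidity: derive x = y, contradiction
      exfalso
      apply hne
      have hSdc : ∀ a k : Fin n, a ≤ k → 0 < x k → 0 < x a :=
        fun a k hak hk => lt_of_lt_of_le hk (hxs hak)
      have hdiag : ∀ k : Fin n, 0 < x k → U k k = 1 := by
        have main : ∀ N : ℕ, ∀ k : Fin n, (k : ℕ) < N → 0 < x k → U k k = 1 := by
          intro N
          induction N with
          | zero => intro k hk; omega
          | succ N ih =>
            intro k hkN hk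
            have hck : c k = 1 := hH k hk
            have hrest : ∀ a : Fin n, a ≠ k → U a k = 0 := by
              intro a ha
              rcases lt_or_gt_of_ne ha with h | h
              · have haS : 0 < x a := hSdc a k h.le hk
                have haN : (a : ℕ) < N := by
                  have := (Fin.lt_def.mp h); omega
                have hdiaga : U a a = 1 := ih a haN haS
                exact Stmt16Aux.offdiag_zero hU0 hU1 hdiaga ha.symm
              · exact hUt a k h
            have : c k = U k k := by
              rw [hc]
              dsimp only
              rw [← Finset.add_sum_erase Finset.univ (fun a => U a k) (Finset.mem_univ k)]
              rw [Finset.sum_eq_zero fun a ha => hrest a (Finset.mem_erase.mp ha).1]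
              ring
            rw [← this, hck]
        intro k hk
        exact main n k k.isLt hk
      have hxy' : ∀ k : Fin n, 0 < x k → x k = y k := by
        intro k hk
        rw [hxk k]
        rw [← Finset.add_sum_erase Finset.univ (fun a => y a * U a k) (Finset.mem_univ k)]
        rw [hdiag k hk, mul_one]
        rw [Finset.sum_eq_zero, add_zero]
        intro a ha
        obtain ⟨hak, _⟩ := Finset.mem_erase.mp ha
        rcases lt_or_gt_of_ne hak with h | h
        · have haS : 0 < x a := hSdc a k h.le hk
          rw [Stmt16Aux.offdiag_zero hU0 hU1 (hdiag a haS) (Ne.symm hak), mul_zero]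
        · rw [hUt a k h, mul_zero]
      -- show y k = 0 when x k = 0
      funext k
      by_cases hk : 0 < x k
      · exact hxy' k hk
      · have hxk0 : x k = 0 := le_antisymm (not_lt.mp hk) (hx0 k)
        have hset : ∀ i : Fin n, i ∈ Finset.univ.filter (fun i => 0 < x i) → x i = y i :=
          fun i hi => hxy' i (Finset.mem_filter.mp hi).2
        have hsum_eq : ∑ i ∈ Finset.univ.filter (fun i => 0 < x i), y i = 1 := by
          rw [← Finset.sum_congr rfl hset]
          rw [Finset.sum_filter_of_ne (fun i _ hne0 => ?_)]
          · exact hx1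
          · rcases lt_or_eq_of_le (hx0 i) with h | h
            · exact h
            · exact absurd h.symm hne0
        have hzero : ∑ i ∈ Finset.univ.filter (fun i => ¬ 0 < x i), y i = 0 := by
          have := Finset.sum_filter_add_sum_filter_not Finset.univ (fun i => 0 < x i) y
          rw [hsum_eq, hy1] at this
          linarith
        have : y k = 0 := by
          have hmem : k ∈ Finset.univ.filter (fun i => ¬ 0 < x i) :=
            Finset.mem_filter.mpr ⟨Finset.mem_univ k, hk⟩
          exact (Finset.sum_eq_zero_iff_of_nonneg (fun i _ => hy0 i)).mp hzero k hmem
        rw [hxk0, this]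
    · push_neg at hH
      obtain ⟨k0, hk0, hck0⟩ := hH
      have hterm : ∀ k : Fin n, x k * Real.log (c k) ≤ x k * (c k - 1) := by
        intro k
        rcases lt_or_eq_of_le (hx0 k) with h | h
        · have hckpos : 0 < c k := lt_of_lt_of_le h (hxc k)
          exact mul_le_mul_of_nonneg_left (Real.log_le_sub_one_of_pos hckpos) h.le
        · rw [← h]; simp
      have hstrict : x k0 * Real.log (c k0) < x k0 * (c k0 - 1) := by
        have hckpos : 0 < c k0 := lt_of_lt_of_le hk0 (hxc k0)
        exact mul_lt_mul_of_pos_left (Real.log_lt_sub_one_of_pos hckpos hck0) hk0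
      have h4 : ∑ k, x k * Real.log (c k) < ∑ k, x k * (c k - 1) :=
        Finset.sum_lt_sum (fun k _ => hterm k) ⟨k0, Finset.mem_univ k0, hstrict⟩
      have h5 : ∑ k, x k * (c k - 1) = (∑ k, x k * c k) - 1 := by
        simp only [mul_sub, mul_one, Finset.sum_sub_distrib, hx1]
      rw [h5] at h4
      linarith
  -- final conversion
  have huU : ∀ i : Fin n, Matrix.vecMul (fun _ : Fin n => (1:ℝ)/n) U i = c i / n := by
    intro i
    simp only [Matrix.vecMul, dotProduct, hc]
    rw [Finset.sum_div]
    apply Finset.sum_congr rfl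
    intro a _
    rw [div_mul_eq_mul_div, one_mul]
  have hterm2 : ∀ i : Fin n,
      x i * Real.logb 2 (1 / Matrix.vecMul (fun _ : Fin n => (1:ℝ)/n) U i)
      = x i * Real.logb 2 n - x i * Real.logb 2 (c i) := by
    intro i
    rcases lt_or_eq_of_le (hx0 i) with h | h
    · have hcip : 0 < c i := lt_of_lt_of_le h (hxc i)
      rw [huU i, one_div_div, Real.logb_div (ne_of_gt hnR) (ne_of_gt hcip), mul_sub]
    · rw [← h]; simp
  rw [Finset.sum_congr rfl fun i _ => hterm2 i, Finset.sum_sub_distrib]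
  have h6 : ∑ i, x i * Real.logb 2 n = Real.logb 2 n := by
    rw [← Finset.sum_mul, hx1, one_mul]
  rw [h6]
  have h7 : ∑ i, x i * Real.logb 2 (c i) < 0 := by
    have hlog2 : 0 < Real.log 2 := Real.log_pos one_lt_two
    have : ∑ i, x i * Real.logb 2 (c i) = (∑ i, x i * Real.log (c i)) / Real.log 2 := by
      rw [Finset.sum_div]
      apply Finset.sum_congr rfl
      intro i _
      rw [Real.logb, div_eq_mul_inv, div_eq_mul_inv, mul_assoc]
    rw [this]
    exact div_neg_of_neg_of_pos key hlog2
  linarith
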